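/- For any b ∈ (0,1), any real x, and any η ≤ 1/(2|x|): sup over a ∈ [0,1] of (|a - b|·x - (1/η)·D_log(a, b)) ≤ η·b²·x², where D_log is the Bregman divergence of the function -log. -/

import Mathlib

open Real

lemma log_one_sub_ge (v : ℝ) (hv0 : 0 ≤ v) (hv : v ≤ 1/2) :
    -v - v^2 ≤ Real.log (1 - v) := by
  have h1 : (0:ℝ) < 1 - v := by linarith
  rw [Real.le_log_iff_exp_le h1]
  have h2 := Real.quadratic_le_exp_of_nonneg (x := v + v^2) (by positivity)
  have h3 : Real.exp (-v - v^2) = 1 / Real.exp (v + v^2) := by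
    rw [show -v - v^2 = -(v+v^2) by ring, Real.exp_neg, inv_eq_one_div]
  rw [h3, div_le_iff₀ (Real.exp_pos _)]
  nlinarith [sq_nonneg v, sq_nonneg (v*v)]

lemma log_one_add_ge (v : ℝ) (hv0 : 0 ≤ v) :
    v - v^2 ≤ Real.log (1 + v) := by
  have h1 : (0:ℝ) < 1 + v := by linarith
  have h2 : Real.log (1/(1+v)) ≤ 1/(1+v) - 1 := Real.log_le_sub_one_of_pos (by positivity)
  rw [Real.log_div one_ne_zero (by linarith), Real.log_one] at h2
  have : 1 - 1/(1+v) ≤ Real.log (1+v) := by linarith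
  have h4 : 1/(1+v) ≤ 1 - v + v^2 := by
    rw [div_le_iff₀ h1]; nlinarith
  linarith

lemma pointwise (b u a : ℝ) (hb : 0 < b) (hb1 : b ≤ 1) (ha : 0 < a)
    (hu : 0 ≤ u) (hu2 : u ≤ 1/2) :
    |a - b| * u ≤ -Real.log a + Real.log b + (a - b)/b + (b*u)^2 := by
  set v := b * u with hv
  have hv0 : 0 ≤ v := by positivity
  have hv2 : v ≤ 1/2 := by nlinarith
  rcases le_total b a with h | h
  · -- a ≥ b, a₀ = b/(1-v)
    have h1v : (0:ℝ) < 1 - v := by linarith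
    set a0 : ℝ := b / (1 - v) with ha0
    have ha0pos : 0 < a0 := by positivity
    have hlog1 : Real.log (a / a0) ≤ a / a0 - 1 := Real.log_le_sub_one_of_pos (by positivity)
    rw [Real.log_div (ne_of_gt ha) (ne_of_gt ha0pos)] at hlog1
    have hlog2 : Real.log a0 = Real.log b - Real.log (1 - v) := by
      rw [ha0, Real.log_div (ne_of_gt hb) (ne_of_gt h1v)]
    have hlog3 := log_one_sub_ge v hv0 hv2
    have habs : |a - b| = a - b := abs_of_nonneg (by linarith)
    rw [habs]
    have hda : a / a0 = a * (1 - v) / b := by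
      rw [ha0]; field_simp
    rw [hda] at hlog1
    -- -log a ≥ -log b + log(1-v) - (a(1-v)/b - 1)
    have key : -Real.log a ≥ -Real.log b + Real.log (1-v) - (a*(1-v)/b - 1) := by
      linarith [hlog1, hlog2.symm.le, hlog2.le]
    have hbne : b ≠ 0 := ne_of_gt hb
    have e1 : (a - b)/b = a/b - 1 := by field_simp
    have e2 : a*(1-v)/b = a/b - a*v/b := by ring
    have e4 : a*(1-v)/b = a/b - a*u := by rw [hv]; field_simp
    have e5 : (a-b)*u = a*u - v := by rw [hv]; ring
    linarith [key, hlog3, e1, e4, e5]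
  · -- a ≤ b, a₀ = b/(1+v)
    have h1v : (0:ℝ) < 1 + v := by linarith
    set a0 : ℝ := b / (1 + v) with ha0
    have ha0pos : 0 < a0 := by positivity
    have hlog1 : Real.log (a / a0) ≤ a / a0 - 1 := Real.log_le_sub_one_of_pos (by positivity)
    rw [Real.log_div (ne_of_gt ha) (ne_of_gt ha0pos)] at hlog1
    have hlog2 : Real.log a0 = Real.log b - Real.log (1 + v) := by
      rw [ha0, Real.log_div (ne_of_gt hb) (ne_of_gt h1v)]
    have hlog3 := log_one_add_ge v hv0
    have habs : |a - b| = b - a := by rw [abs_sub_comm]; exact abs_of_nonneg (by linarith)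
    rw [habs]
    have hda : a / a0 = a * (1 + v) / b := by
      rw [ha0]; field_simp
    rw [hda] at hlog1
    have key : -Real.log a ≥ -Real.log b + Real.log (1+v) - (a*(1+v)/b - 1) := by
      linarith [hlog1, hlog2.le]
    have hbne : b ≠ 0 := ne_of_gt hb
    have e1 : (a - b)/b = a/b - 1 := by field_simp
    have e4 : a*(1+v)/b = a/b + a*u := by rw [hv]; field_simp
    have e5 : (b-a)*u = v - a*u := by rw [hv]; ring
    linarith [key, hlog3, e1, e4, e5]

/-- One-dimensional log-barrier stability bound. -/
theorem logdet_scalar_stability (b x η : ℝ) (hb0 : 0 < b) (hb1 : b < 1)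
    (hη : 0 < η) (hηx : η * (2 * |x|) ≤ 1)
    (a : ℝ) (ha : a ∈ Set.Ioc (0:ℝ) 1) :
    |a - b| * x - (1/η) * (-Real.log a + Real.log b + (a - b) / b)
    ≤ η * b^2 * x^2 := by
  obtain ⟨D, hD⟩ : ∃ D, D = -Real.log a + Real.log b + (a - b) / b := ⟨_, rfl⟩
  rw [← hD]
  have hu2 : η * |x| ≤ 1/2 := by nlinarith [abs_nonneg x]
  have hp := pointwise b (η * |x|) a hb0 hb1.le ha.1 (by positivity) hu2
  have hxx : |x|^2 = x^2 := sq_abs x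
  have key : η * (|a - b| * x) ≤ D + η^2*b^2*x^2 := by
    have h1 : η * (|a - b| * x) ≤ η * (|a - b| * |x|) := by
      have := mul_le_mul_of_nonneg_left (le_abs_self x) (abs_nonneg (a - b))
      nlinarith
    have h2 : η * (|a - b| * |x|) = |a - b| * (η * |x|) := by ring
    have h3 : (b*(η*|x|))^2 = η^2*b^2*x^2 := by
      rw [mul_pow, mul_pow, hxx]; ring
    rw [h2] at h1
    linarith [hp, h3.le, h3.ge, hD.le, hD.ge]
  have hinv : η * ((1/η) * D) = D := by field_simp
  have h4 : η * (|a - b| * x - (1/η) * D) ≤ η * (η * b^2 * x^2) := by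
    rw [mul_sub, hinv]
    nlinarith [key]
  exact le_of_mul_le_mul_left h4 hη
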